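/- Let c¹,…,cⁿ be a lattice basis of ℤⁿ and let x̄ ∈ K_C ∩ ℤⁿ with x̄ ≠ 0. Then Q_C(x̄) = {x ∈ ℝⁿ : c^i·x ≥ 0 for i = 1,…,n, and ∑_{i=1}^k d^k_i (c^i·x) ≥ ∑_{i=1}^k d^k_i (c^i·x̄) for k = 1,…,n}. -/

import Mathlib

/-- `x` is an integer point. -/
def isInt {n : ℕ} (x : Fin n → ℝ) : Prop := ∀ i, ∃ z : ℤ, x i = (z : ℝ)

/-- Dot product of an integer vector with a real vector. -/
def rdot {n : ℕ} (c : Fin n → ℤ) (x : Fin n → ℝ) : ℝ := ∑ j, (c j : ℝ) * x j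

/-- Lexicographic strict order associated with the lattice basis given by the rows of `C`. -/
def lexLtC {n : ℕ} (C : Matrix (Fin n) (Fin n) ℤ) (x y : Fin n → ℝ) : Prop :=
  ∃ i : Fin n, rdot (C i) x < rdot (C i) y ∧ ∀ j : Fin n, j < i → rdot (C j) x = rdot (C j) y

/-- `x ⪯_C y` iff `x ≺_C y` or `x = y`. -/
def lexLeC {n : ℕ} (C : Matrix (Fin n) (Fin n) ℤ) (x y : Fin n → ℝ) : Prop :=
  lexLtC C x y ∨ x = y

/-- `Q_C(x̄) = conv {x ∈ K_C ∩ ℤⁿ : x ⪰_C x̄}`. -/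
def QC {n : ℕ} (C : Matrix (Fin n) (Fin n) ℤ) (xb : Fin n → ℝ) : Set (Fin n → ℝ) :=
  convexHull ℝ {x | (∀ i, 0 ≤ rdot (C i) x) ∧ isInt x ∧ lexLeC C xb x}

/-- The lex-cut coefficients for a general lattice basis:
`d^k_k = 1`, `d^k_{k-1} = cᵏ·x̄`, and `d^k_i = (cᵏ·x̄)·∏_{j=i+1}^{k-1}(cʲ·x̄ + 1)`
for `i ≤ k-2`. -/
noncomputable def dcoefC {n : ℕ} (C : Matrix (Fin n) (Fin n) ℤ) (xb : Fin n → ℝ)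
    (k i : Fin n) : ℝ :=
  if i = k then 1 else rdot (C k) xb * ∏ j ∈ Finset.Ioo i k, (rdot (C j) xb + 1)


namespace Stmt9Aux
open Finset

variable {n : ℕ}

/-- plain lexicographic strict order on coordinates -/
def Lt {n : ℕ} (u v : Fin n → ℝ) : Prop := ∃ i, u i < v i ∧ ∀ j, j < i → u j = v j

def Le {n : ℕ} (u v : Fin n → ℝ) : Prop := Lt u v ∨ u = v

noncomputable def D {n : ℕ} (yb : Fin n → ℝ) (k i : Fin n) : ℝ :=
  if i = k then 1 else yb k * ∏ j ∈ Finset.Ioo i k, (yb j + 1)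

def T {n : ℕ} (yb : Fin n → ℝ) : Set (Fin n → ℝ) :=
  {z | (∀ i, 0 ≤ z i) ∧ isInt z ∧ Le yb z}

def P {n : ℕ} (yb : Fin n → ℝ) : Set (Fin n → ℝ) :=
  {y | (∀ i, 0 ≤ y i) ∧ ∀ k, ∑ i ∈ Finset.Iic k, D yb k i * y i ≥
    ∑ i ∈ Finset.Iic k, D yb k i * yb i}

lemma prod_one_add {α : Type*} [LinearOrder α] (f : α → ℝ) (s : Finset α) :
    ∏ j ∈ s, (f j + 1) = 1 + ∑ i ∈ s, f i * ∏ j ∈ s.filter (i < ·), (f j + 1) := by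
  classical
  induction s using Finset.induction_on_min with
  | empty => simp
  | insert a s ha ih =>
    have hns : a ∉ s := fun h => lt_irrefl a (ha a h)
    rw [Finset.prod_insert hns, Finset.sum_insert hns]
    have h1 : (insert a s).filter (a < ·) = s := by
      ext x
      simp only [Finset.mem_filter, Finset.mem_insert]
      constructor
      · rintro ⟨h | h, hx⟩
        · exact absurd hx (by simp [h])
        · exact h
      · exact fun h => ⟨Or.inr h, ha x h⟩
    have h2 : ∀ i ∈ s, (insert a s).filter (i < ·) = s.filter (i < ·) := by
      intro i hi
      ext x
      simp only [Finset.mem_filter, Finset.mem_insert]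
      constructor
      · rintro ⟨h | h, hx⟩
        · exact absurd hx (by simp [h]; exact le_of_lt (ha i hi))
        · exact ⟨h, hx⟩
      · exact fun ⟨h, hx⟩ => ⟨Or.inr h, hx⟩
    rw [h1, Finset.sum_congr rfl (fun i hi => by rw [h2 i hi]), ih]
    ring

lemma D_nonneg {yb : Fin n → ℝ} (hyb : ∀ i, 0 ≤ yb i) (k i : Fin n) : 0 ≤ D yb k i := by
  unfold D
  split
  · norm_num
  · exact mul_nonneg (hyb k) (Finset.prod_nonneg fun j _ => by linarith [hyb j])

/-- the key telescoping identity -/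
lemma D_key {yb : Fin n → ℝ} {t k : Fin n} (htk : t < k) :
    ∑ i ∈ Finset.Ioc t k, D yb k i * yb i = D yb k t := by
  have hIoc : Finset.Ioc t k = insert k (Finset.Ioo t k) := (Finset.Ioo_insert_right htk).symm
  have hk : k ∉ Finset.Ioo t k := by simp
  rw [hIoc, Finset.sum_insert hk]
  have hDt : D yb k t = yb k * ∏ j ∈ Finset.Ioo t k, (yb j + 1) := by
    unfold D; rw [if_neg (ne_of_lt htk)]
  have hDk : D yb k k = 1 := by unfold D; rw [if_pos rfl]
  have hfil : ∀ i ∈ Finset.Ioo t k, (Finset.Ioo t k).filter (i < ·) = Finset.Ioo i k := by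
    intro i hi
    simp only [Finset.mem_Ioo] at hi
    ext x
    simp only [Finset.mem_filter, Finset.mem_Ioo]
    constructor
    · rintro ⟨⟨_, h2⟩, h3⟩; exact ⟨h3, h2⟩
    · rintro ⟨h1, h2⟩; exact ⟨⟨lt_trans hi.1 h1, h2⟩, h1⟩
  have hD : ∀ i ∈ Finset.Ioo t k, D yb k i = yb k * ∏ j ∈ Finset.Ioo i k, (yb j + 1) := by
    intro i hi
    simp only [Finset.mem_Ioo] at hi
    unfold D; rw [if_neg (ne_of_lt hi.2)]
  rw [hDt, hDk, prod_one_add]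
  rw [Finset.sum_congr rfl (fun i hi => by rw [hD i hi, ← hfil i hi])]
  rw [mul_add, Finset.mul_sum, mul_one, one_mul]
  congr 1
  apply Finset.sum_congr rfl
  intro i _
  ring

lemma int_lt_add_one_le {a b : ℝ} (ha : ∃ z : ℤ, a = z) (hb : ∃ z : ℤ, b = z) (h : a < b) :
    a + 1 ≤ b := by
  obtain ⟨x, rfl⟩ := ha; obtain ⟨y, rfl⟩ := hb
  have hxy : x < y := by exact_mod_cast h
  have : x + 1 ≤ y := hxy
  exact_mod_cast this

lemma T_subset_P {yb : Fin n → ℝ} (hyb : ∀ i, 0 ≤ yb i) (hybI : isInt yb) : T yb ⊆ P yb := by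
  rintro z ⟨hz0, hzI, hle⟩
  refine ⟨hz0, fun k => ?_⟩
  rcases hle with hlt | rfl
  · obtain ⟨i0, hi0, hpre⟩ := hlt
    rcases lt_or_ge k i0 with hk | hk
    · apply le_of_eq
      exact Finset.sum_congr rfl fun i hi =>
        by rw [hpre i (lt_of_le_of_lt (Finset.mem_Iic.mp hi) hk)]
    · rw [ge_iff_le, ← sub_nonneg, ← Finset.sum_sub_distrib]
      rw [← Finset.sum_filter_add_sum_filter_not (Finset.Iic k) (· < i0)]
      have h1 : ∑ i ∈ (Finset.Iic k).filter (· < i0),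
          (D yb k i * z i - D yb k i * yb i) = 0 := by
        apply Finset.sum_eq_zero
        intro i hi
        simp only [Finset.mem_filter] at hi
        rw [hpre i hi.2]; ring
      have hset : (Finset.Iic k).filter (fun i => ¬ i < i0) = Finset.Icc i0 k := by
        ext i
        simp only [Finset.mem_filter, Finset.mem_Iic, Finset.mem_Icc, not_lt]
        tauto
      rw [h1, zero_add, hset, ← Finset.Ioc_insert_left hk,
        Finset.sum_insert (by simp)]
      have hz1 : yb i0 + 1 ≤ z i0 := int_lt_add_one_le (hybI i0) (hzI i0) hi0
      have hzn : (0:ℝ) ≤ ∑ i ∈ Finset.Ioc i0 k, D yb k i * z i :=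
        Finset.sum_nonneg fun i _ => mul_nonneg (D_nonneg hyb k i) (hz0 i)
      have hsplit : ∑ i ∈ Finset.Ioc i0 k, (D yb k i * z i - D yb k i * yb i)
          = ∑ i ∈ Finset.Ioc i0 k, D yb k i * z i
            - ∑ i ∈ Finset.Ioc i0 k, D yb k i * yb i := Finset.sum_sub_distrib _ _
      rcases lt_or_eq_of_le hk with hlt' | rfl
      · rw [hsplit, D_key hlt']
        have hD0 := D_nonneg hyb k i0
        nlinarith
      · rw [Finset.Ioc_self, Finset.sum_empty, add_zero]
        have : D yb i0 i0 = 1 := if_pos rfl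
        rw [this]
        nlinarith
  · exact le_refl _

lemma P_convex (yb : Fin n → ℝ) : Convex ℝ (P yb) := by
  intro x hx y hy a b ha hb hab
  refine ⟨fun i => ?_, fun k => ?_⟩
  · have h1 := hx.1 i; have h2 := hy.1 i
    simp only [Pi.add_apply, Pi.smul_apply, smul_eq_mul]
    nlinarith
  · have hxk := hx.2 k; have hyk := hy.2 k
    have hcomb : ∑ i ∈ Finset.Iic k, D yb k i * (a • x + b • y) i
        = a * ∑ i ∈ Finset.Iic k, D yb k i * x i
          + b * ∑ i ∈ Finset.Iic k, D yb k i * y i := by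
      rw [Finset.mul_sum, Finset.mul_sum, ← Finset.sum_add_distrib]
      refine Finset.sum_congr rfl fun i _ => ?_
      simp only [Pi.add_apply, Pi.smul_apply, smul_eq_mul]
      ring
    rw [ge_iff_le, hcomb]
    calc ∑ i ∈ Finset.Iic k, D yb k i * yb i
        = a * (∑ i ∈ Finset.Iic k, D yb k i * yb i)
          + b * (∑ i ∈ Finset.Iic k, D yb k i * yb i) := by
          rw [← add_mul, hab, one_mul]
      _ ≤ a * ∑ i ∈ Finset.Iic k, D yb k i * x i
          + b * ∑ i ∈ Finset.Iic k, D yb k i * y i :=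
          add_le_add (mul_le_mul_of_nonneg_left hxk ha) (mul_le_mul_of_nonneg_left hyk hb)

lemma box_lemma (a : Fin n → ℝ) (ha : isInt a) :
    ∀ y : Fin n → ℝ, (∀ i, a i ≤ y i) →
      y ∈ convexHull ℝ {z | isInt z ∧ ∀ i, a i ≤ z i} := by
  classical
  suffices key : ∀ m : ℕ, ∀ y : Fin n → ℝ,
      (Finset.univ.filter (fun i => ¬ ∃ z : ℤ, y i = (z:ℝ))).card = m →
      (∀ i, a i ≤ y i) → y ∈ convexHull ℝ {z | isInt z ∧ ∀ i, a i ≤ z i} by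
    intro y hy
    exact key _ y rfl hy
  intro m
  induction m using Nat.strong_induction_on with
  | _ m ih =>
    intro y hcard hay
    by_cases hint : ∀ i, ∃ z : ℤ, y i = (z:ℝ)
    · exact subset_convexHull ℝ _ ⟨hint, hay⟩
    · push_neg at hint
      obtain ⟨i0, hi0⟩ := hint
      have hmem : i0 ∈ Finset.univ.filter (fun i => ¬ ∃ z : ℤ, y i = (z:ℝ)) := by
        simp only [Finset.mem_filter, Finset.mem_univ, true_and]
        push_neg
        exact hi0
      have hflt : (⌊y i0⌋ : ℝ) < y i0 :=
        lt_of_le_of_ne (Int.floor_le _) (fun h => hi0 ⌊y i0⌋ h.symm)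
      have hclt : y i0 < (⌊y i0⌋ : ℝ) + 1 := Int.lt_floor_add_one _
      set yl := Function.update y i0 ((⌊y i0⌋ : ℝ)) with hyl
      set yu := Function.update y i0 ((⌊y i0⌋ : ℝ) + 1) with hyu
      have hFl : ∀ (c : ℝ), (∃ z : ℤ, c = (z:ℝ)) →
          (Finset.univ.filter (fun i => ¬ ∃ z : ℤ, Function.update y i0 c i = (z:ℝ)))
            = (Finset.univ.filter (fun i => ¬ ∃ z : ℤ, y i = (z:ℝ))).erase i0 := by
        intro c hc
        ext j
        rcases eq_or_ne j i0 with rfl | hj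
        · simp only [Finset.mem_filter, Finset.mem_univ, true_and, Finset.mem_erase,
            ne_eq, not_true_eq_false, false_and, iff_false, Function.update_self, not_not]
          exact hc
        · simp only [Finset.mem_filter, Finset.mem_univ, true_and, Finset.mem_erase, ne_eq, hj,
            not_false_eq_true, Function.update_of_ne hj]
      have hcard' : ((Finset.univ.filter (fun i => ¬ ∃ z : ℤ, y i = (z:ℝ))).erase i0).card < m := by
        rw [Finset.card_erase_of_mem hmem, hcard]
        have : 0 < m := by
          rw [← hcard]
          exact Finset.card_pos.mpr ⟨i0, hmem⟩
        omega
      have hal : ∀ i, a i ≤ yl i := by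
        intro i
        rcases eq_or_ne i i0 with rfl | hi
        · rw [hyl, Function.update_self]
          obtain ⟨z, hz⟩ := ha i
          rw [hz]
          exact_mod_cast Int.le_floor.mpr (by rw [← hz]; exact hay i)
        · rw [hyl, Function.update_of_ne hi]; exact hay i
      have hau : ∀ i, a i ≤ yu i := by
        intro i
        rcases eq_or_ne i i0 with rfl | hi
        · rw [hyu, Function.update_self]
          have h2 := hal i
          rw [hyl, Function.update_self] at h2
          linarith
        · rw [hyu, Function.update_of_ne hi]; exact hay i
      have hylm : yl ∈ convexHull ℝ {z | isInt z ∧ ∀ i, a i ≤ z i} := by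
        apply ih _ hcard' yl _ hal
        rw [hyl, hFl _ ⟨⌊y i0⌋, rfl⟩]
      have hyum : yu ∈ convexHull ℝ {z | isInt z ∧ ∀ i, a i ≤ z i} := by
        apply ih _ hcard' yu _ hau
        rw [hyu, hFl _ ⟨⌊y i0⌋ + 1, by push_cast; ring⟩]
      set lam : ℝ := (⌊y i0⌋ : ℝ) + 1 - y i0 with hlam
      have h01 : 0 ≤ lam := by linarith
      have h02 : 0 ≤ 1 - lam := by linarith
      have hcomb := (convex_convexHull ℝ {z | isInt z ∧ ∀ i, a i ≤ z i})
        hylm hyum h01 h02 (by ring)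
      have : lam • yl + (1 - lam) • yu = y := by
        funext j
        rcases eq_or_ne j i0 with rfl | hj
        · simp only [Pi.add_apply, Pi.smul_apply, smul_eq_mul, hyl, hyu, Function.update_self]
          ring
        · simp only [Pi.add_apply, Pi.smul_apply, smul_eq_mul, hyl, hyu,
            Function.update_of_ne hj]
          ring
      rwa [this] at hcomb

lemma sum_Iic_zero (f : Fin (n+1) → ℝ) :
    ∑ i ∈ Finset.Iic (0 : Fin (n+1)), f i = f 0 := by
  rw [show Finset.Iic (0:Fin (n+1)) = {0} by ext i; simp [Fin.le_zero_iff]]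
  simp

lemma sum_Iic_succ (k : Fin n) (f : Fin (n+1) → ℝ) :
    ∑ i ∈ Finset.Iic k.succ, f i = f 0 + ∑ i ∈ Finset.Iic k, f i.succ := by
  rw [show Finset.Iic k.succ = Finset.univ.filter (· ≤ k.succ) from by ext i; simp]
  rw [show (Finset.Iic k) = Finset.univ.filter (· ≤ k) from by ext i; simp]
  rw [Finset.sum_filter, Finset.sum_filter, Fin.sum_univ_succ]
  simp [Fin.succ_le_succ_iff, Fin.zero_le]

lemma sum_Ioc_zero_succ (k : Fin n) (f : Fin (n+1) → ℝ) :
    ∑ i ∈ Finset.Ioc (0 : Fin (n+1)) k.succ, f i = ∑ i ∈ Finset.Iic k, f i.succ := by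
  rw [show Finset.Ioc (0:Fin (n+1)) k.succ
      = Finset.univ.filter (fun i => 0 < i ∧ i ≤ k.succ) from by ext i; simp]
  rw [show (Finset.Iic k) = Finset.univ.filter (· ≤ k) from by ext i; simp]
  rw [Finset.sum_filter, Finset.sum_filter, Fin.sum_univ_succ]
  simp [Fin.succ_le_succ_iff, Fin.succ_pos]

lemma prod_Ioo_succ (i k : Fin n) (g : Fin (n+1) → ℝ) :
    ∏ j ∈ Finset.Ioo i.succ k.succ, g j = ∏ j ∈ Finset.Ioo i k, g j.succ := by
  rw [show Finset.Ioo i.succ k.succ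
      = Finset.univ.filter (fun j => i.succ < j ∧ j < k.succ) from by ext j; simp]
  rw [show (Finset.Ioo i k) = Finset.univ.filter (fun j => i < j ∧ j < k) from by ext j; simp]
  rw [Finset.prod_filter, Finset.prod_filter, Fin.prod_univ_succ]
  simp [Fin.succ_lt_succ_iff, Fin.not_lt_zero]

lemma D_succ_succ (yb : Fin (n+1) → ℝ) (k i : Fin n) :
    D yb k.succ i.succ = D (Fin.tail yb) k i := by
  unfold D
  rcases eq_or_ne i k with rfl | h
  · simp
  · rw [if_neg (by simpa [Fin.succ_inj] using h), if_neg h, prod_Ioo_succ]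
    rfl

lemma D_zero_succ (yb : Fin (n+1) → ℝ) (k : Fin n) :
    D yb k.succ 0 = ∑ i ∈ Finset.Iic k, D (Fin.tail yb) k i * Fin.tail yb i := by
  rw [← D_key (Fin.succ_pos k), sum_Ioc_zero_succ]
  exact Finset.sum_congr rfl fun i _ => by rw [D_succ_succ]; rfl

lemma cons_mem_hull (yb : Fin (n+1) → ℝ) (hyb0 : ∀ i, 0 ≤ yb i) (hybI : isInt yb)
    {w : Fin n → ℝ} (hw : w ∈ convexHull ℝ (T (Fin.tail yb))) :
    (Fin.cons (yb 0) w : Fin (n+1) → ℝ) ∈ convexHull ℝ (T yb) := by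
  have hpre : convexHull ℝ (T (Fin.tail yb)) ⊆
      (fun z : Fin n → ℝ => (Fin.cons (yb 0) z : Fin (n+1) → ℝ)) ⁻¹' (convexHull ℝ (T yb)) := by
    apply convexHull_min
    · rintro z ⟨hz0, hzI, hle⟩
      apply subset_convexHull
      refine ⟨fun i => ?_, fun i => ?_, ?_⟩
      · refine Fin.cases ?_ ?_ i
        · simpa using hyb0 0
        · intro j; simpa using hz0 j
      · refine Fin.cases ?_ ?_ i
        · simpa using hybI 0
        · intro j; simpa using hzI j
      · rcases hle with ⟨i, hi, hj⟩ | heq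
        · refine Or.inl ⟨i.succ, by simpa [Fin.tail] using hi, fun j hj' => ?_⟩
          rcases Fin.eq_zero_or_eq_succ j with rfl | ⟨j', rfl⟩
          · simp
          · have : j' < i := Fin.succ_lt_succ_iff.mp hj'
            simpa [Fin.tail] using hj j' this
        · subst heq
          exact Or.inr (show yb = (Fin.cons (yb 0) (Fin.tail yb) : Fin (n+1) → ℝ) from
            (Fin.cons_self_tail yb).symm)
    · intro x1 h1 x2 h2 a b ha hb hab
      simp only [Set.mem_preimage] at h1 h2 ⊢
      have hkey : (Fin.cons (yb 0) (a • x1 + b • x2) : Fin (n+1) → ℝ)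
          = a • (Fin.cons (yb 0) x1 : Fin (n+1) → ℝ)
            + b • (Fin.cons (yb 0) x2 : Fin (n+1) → ℝ) := by
        funext i
        refine Fin.cases ?_ ?_ i
        · simp only [Fin.cons_zero, Pi.add_apply, Pi.smul_apply, smul_eq_mul]
          rw [← add_mul, hab, one_mul]
        · intro j
          simp [Fin.cons_succ]
      rw [hkey]
      exact (convex_convexHull ℝ (T yb)) h1 h2 ha hb hab
  exact hpre hw

lemma ident_back : ∀ {n : ℕ} (yb : Fin n → ℝ), (∀ i, 0 ≤ yb i) → isInt yb →
    ∀ y ∈ P yb, y ∈ convexHull ℝ (T yb) := by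
  intro n
  induction n with
  | zero =>
    intro yb _ _ y _
    have hyyb : yb = y := funext fun i => i.elim0
    exact subset_convexHull ℝ _ ⟨fun i => i.elim0, fun i => i.elim0, Or.inr hyyb⟩
  | succ n ih =>
    intro yb hyb0 hybI y hy
    obtain ⟨hy0, hcut⟩ := hy
    have hcut0 : yb 0 ≤ y 0 := by
      have h := hcut 0
      rw [sum_Iic_zero, sum_Iic_zero] at h
      have hD00 : D yb 0 0 = (1:ℝ) := if_pos rfl
      rw [hD00, one_mul, one_mul] at h
      exact h
    set μ : ℝ := y 0 - yb 0 with hμ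
    have hμ0 : 0 ≤ μ := by simp only [hμ]; linarith
    rcases le_or_gt 1 μ with hbig | hsmall
    · -- y 0 ≥ yb 0 + 1 : box case
      set a : Fin (n+1) → ℝ := Fin.cons (yb 0 + 1) 0 with hadef
      have haI : isInt a := by
        intro i
        refine Fin.cases ?_ ?_ i
        · obtain ⟨z, hz⟩ := hybI 0
          exact ⟨z + 1, by simp [hadef, hz]⟩
        · intro j; exact ⟨0, by simp [hadef]⟩
      have hay : ∀ i, a i ≤ y i := by
        intro i
        refine Fin.cases ?_ ?_ i
        · simp only [hadef, Fin.cons_zero]; linarith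
        · intro j; simp only [hadef, Fin.cons_succ, Pi.zero_apply]; exact hy0 _
      have hsub : {z : Fin (n+1) → ℝ | isInt z ∧ ∀ i, a i ≤ z i} ⊆ T yb := by
        rintro z ⟨hzI, hza⟩
        have hz00 : yb 0 + 1 ≤ z 0 := by simpa [hadef] using hza 0
        refine ⟨fun i => ?_, hzI,
          Or.inl ⟨0, by linarith, fun j hj => absurd hj (Fin.not_lt_zero j)⟩⟩
        refine Fin.cases ?_ ?_ i
        · linarith [hyb0 0]
        · intro j
          have := hza j.succ
          simpa [hadef] using this
      exact convexHull_mono hsub (box_lemma a haI y hay)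
    · -- fractional case
      set t : ℝ := 1 - μ with ht
      have htpos : 0 < t := by simp only [ht]; linarith
      set w : Fin n → ℝ := fun i => y i.succ / t with hwdef
      have hw0 : ∀ i, 0 ≤ w i := fun i => div_nonneg (hy0 _) htpos.le
      have hwcut : ∀ k : Fin n, ∑ i ∈ Finset.Iic k, D (Fin.tail yb) k i * w i ≥
          ∑ i ∈ Finset.Iic k, D (Fin.tail yb) k i * Fin.tail yb i := by
        intro k
        have h1 := hcut k.succ
        rw [sum_Iic_succ, sum_Iic_succ] at h1
        have hrw : ∑ i ∈ Finset.Iic k, D yb k.succ i.succ * y i.succ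
            = t * ∑ i ∈ Finset.Iic k, D (Fin.tail yb) k i * w i := by
          rw [Finset.mul_sum]
          refine Finset.sum_congr rfl fun i _ => ?_
          rw [D_succ_succ]
          have hy' : y i.succ = t * w i := by
            simp only [hwdef]
            field_simp
          rw [hy']; ring
        have hrw2 : ∑ i ∈ Finset.Iic k, D yb k.succ i.succ * yb i.succ
            = ∑ i ∈ Finset.Iic k, D (Fin.tail yb) k i * Fin.tail yb i :=
          Finset.sum_congr rfl fun i _ => by rw [D_succ_succ]; rfl
        rw [hrw, hrw2, D_zero_succ] at h1
        set Sb := ∑ i ∈ Finset.Iic k, D (Fin.tail yb) k i * Fin.tail yb i with hSb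
        set Sw := ∑ i ∈ Finset.Iic k, D (Fin.tail yb) k i * w i with hSw
        -- h1 : Sb * y 0 + t * Sw ≥ Sb * yb 0 + Sb
        have hts : t * Sb ≤ t * Sw := by
          have hμval : y 0 = yb 0 + μ := by simp only [hμ]; ring
          rw [hμval, ht] at h1
          simp only [ht]
          nlinarith [h1]
        exact le_of_mul_le_mul_left hts htpos
      have hwmem := ih (Fin.tail yb) (fun i => hyb0 i.succ) (fun i => hybI i.succ) w
        ⟨hw0, hwcut⟩
      have humem : (Fin.cons (yb 0) w : Fin (n+1) → ℝ) ∈ convexHull ℝ (T yb) :=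
        cons_mem_hull yb hyb0 hybI hwmem
      have hvmem : (Fin.cons (yb 0 + 1) 0 : Fin (n+1) → ℝ) ∈ T yb := by
        refine ⟨fun i => ?_, fun i => ?_, Or.inl ⟨0, by simp, fun j hj =>
          absurd hj (Fin.not_lt_zero j)⟩⟩
        · refine Fin.cases ?_ ?_ i
          · simp only [Fin.cons_zero]; linarith [hyb0 0]
          · intro j; simp
        · refine Fin.cases ?_ ?_ i
          · obtain ⟨z, hz⟩ := hybI 0
            exact ⟨z + 1, by simp [hz]⟩
          · intro j; exact ⟨0, by simp⟩
      have hcomb := (convex_convexHull ℝ (T yb)) humem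
        (subset_convexHull ℝ _ hvmem) htpos.le hμ0 (by simp only [ht]; ring)
      have heq : t • (Fin.cons (yb 0) w : Fin (n+1) → ℝ)
          + μ • (Fin.cons (yb 0 + 1) 0 : Fin (n+1) → ℝ) = y := by
        funext i
        refine Fin.cases ?_ ?_ i
        · simp only [Pi.add_apply, Pi.smul_apply, Fin.cons_zero, smul_eq_mul, ht, hμ]
          ring
        · intro j
          simp only [Pi.add_apply, Pi.smul_apply, Fin.cons_succ, smul_eq_mul, hwdef,
            Pi.zero_apply, mul_zero, add_zero]
          field_simp
      rwa [heq] at hcomb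


theorem ident_main {n : ℕ} (yb : Fin n → ℝ) (hyb0 : ∀ i, 0 ≤ yb i) (hybI : isInt yb) :
    convexHull ℝ (T yb) = P yb :=
  subset_antisymm (convexHull_min (T_subset_P hyb0 hybI) (P_convex yb))
    (fun y hy => ident_back yb hyb0 hybI y hy)

lemma preimage_eq_image {L Li : (Fin n → ℝ) → (Fin n → ℝ)}
    (h1 : ∀ x, Li (L x) = x) (h2 : ∀ x, L (Li x) = x) (s : Set (Fin n → ℝ)) :
    L ⁻¹' s = Li '' s := by
  ext x
  constructor
  · intro hx; exact ⟨L x, hx, h1 x⟩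
  · rintro ⟨y, hy, rfl⟩; rwa [Set.mem_preimage, h2]

lemma mulVec_isInt (A : Matrix (Fin n) (Fin n) ℤ) (v : Fin n → ℝ) (hv : isInt v) :
    isInt ((A.map (Int.castRingHom ℝ : ℤ → ℝ)).mulVec v) := by
  intro i
  choose zv hzv using hv
  refine ⟨∑ j, A i j * zv j, ?_⟩
  show ∑ j, ((A i j : ℝ)) * v j = _
  push_cast
  exact Finset.sum_congr rfl fun j _ => by rw [hzv j]

end Stmt9Aux

open Stmt9Aux in
/-- For a lattice basis (rows of a unimodular `C`) and `x̄ ∈ K_C ∩ ℤⁿ`, `x̄ ≠ 0`, the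
lex-cuts for `k = 1,…,n` and the inequalities `cⁱ·x ≥ 0` describe `Q_C(x̄)`. -/
theorem stmt9 {n : ℕ} (C : Matrix (Fin n) (Fin n) ℤ) (hC : C.det = 1 ∨ C.det = -1)
    (xb : Fin n → ℝ) (hK : ∀ i, 0 ≤ rdot (C i) xb) (hI : isInt xb) (hx0 : xb ≠ 0) :
    QC C xb = {x : Fin n → ℝ | (∀ i, 0 ≤ rdot (C i) x) ∧ ∀ k : Fin n,
      ∑ i ∈ Finset.Iic k, dcoefC C xb k i * rdot (C i) x ≥
        ∑ i ∈ Finset.Iic k, dcoefC C xb k i * rdot (C i) xb} := by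
  classical
  set B : Matrix (Fin n) (Fin n) ℤ := C.det • C.adjugate with hB
  have hdet2 : C.det * C.det = 1 := by rcases hC with h | h <;> rw [h] <;> norm_num
  have hBC : B * C = 1 := by
    rw [hB, Matrix.smul_mul, Matrix.adjugate_mul, smul_smul, hdet2, one_smul]
  have hCB : C * B = 1 := by
    rw [hB, Matrix.mul_smul, Matrix.mul_adjugate, smul_smul, hdet2, one_smul]
  set Cr : Matrix (Fin n) (Fin n) ℝ := C.map (Int.castRingHom ℝ : ℤ → ℝ) with hCr
  set Br : Matrix (Fin n) (Fin n) ℝ := B.map (Int.castRingHom ℝ : ℤ → ℝ) with hBr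
  have hBCr : Br * Cr = 1 := by
    rw [hBr, hCr, ← Matrix.map_mul, hBC, Matrix.map_one _ (map_zero _) (map_one _)]
  have hCBr : Cr * Br = 1 := by
    rw [hBr, hCr, ← Matrix.map_mul, hCB, Matrix.map_one _ (map_zero _) (map_one _)]
  set L : (Fin n → ℝ) → (Fin n → ℝ) := Cr.mulVec with hL
  set Li : (Fin n → ℝ) → (Fin n → ℝ) := Br.mulVec with hLi
  have h1 : ∀ x, Li (L x) = x := fun x => by
    rw [hL, hLi, Matrix.mulVec_mulVec, hBCr, Matrix.one_mulVec]
  have h2 : ∀ x, L (Li x) = x := fun x => by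
    rw [hL, hLi, Matrix.mulVec_mulVec, hCBr, Matrix.one_mulVec]
  have hrdot : ∀ (x : Fin n → ℝ) (i : Fin n), rdot (C i) x = L x i := fun x i => rfl
  set yb : Fin n → ℝ := fun i => rdot (C i) xb with hyb
  have hybL : yb = L xb := funext fun i => hrdot xb i
  have hyb0 : ∀ i, 0 ≤ yb i := hK
  have hybI : isInt yb := hybL ▸ mulVec_isInt C xb hI
  -- the generator set is the preimage of T yb
  have hS : {x : Fin n → ℝ | (∀ i, 0 ≤ rdot (C i) x) ∧ isInt x ∧ lexLeC C xb x}
      = L ⁻¹' (T yb) := by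
    ext x
    simp only [Set.mem_setOf_eq, Set.mem_preimage, T, Stmt9Aux.Le, Stmt9Aux.Lt,
      lexLeC, lexLtC]
    refine and_congr Iff.rfl (and_congr ?_ ?_)
    · constructor
      · exact fun hx => mulVec_isInt C x hx
      · intro hx
        have : x = Li (L x) := (h1 x).symm
        rw [this, hLi]
        exact mulVec_isInt B (L x) hx
    · refine or_congr Iff.rfl ?_
      constructor
      · rintro rfl; exact hybL
      · intro hx
        have : L xb = L x := by rw [← hybL, hx]
        calc xb = Li (L xb) := (h1 xb).symm
          _ = Li (L x) := by rw [this]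
          _ = x := h1 x
  -- the target set is the preimage of P yb
  have hR : {x : Fin n → ℝ | (∀ i, 0 ≤ rdot (C i) x) ∧ ∀ k : Fin n,
      ∑ i ∈ Finset.Iic k, dcoefC C xb k i * rdot (C i) x ≥
        ∑ i ∈ Finset.Iic k, dcoefC C xb k i * rdot (C i) xb}
      = L ⁻¹' (P yb) := rfl
  rw [QC, hS, hR, preimage_eq_image h1 h2, preimage_eq_image h1 h2,
    ← ident_main yb hyb0 hybI]
  exact ((Matrix.mulVecLin Br).image_convexHull (T yb)).symm
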